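/- Let λ > 0, α > 0, and let x be a real m × n matrix with singular value decomposition x = Q Σ Vᵀ, where Q and V are orthogonal and Σ = diag(σ₁, …, σ_min(m,n)) with σᵢ ≥ 0. Then the matrix p = Q diag(max(σ₁ − αλ, 0), …, max(σ_min(m,n) − αλ, 0)) Vᵀ is a minimizer over u of α‖u‖_* + ‖x − u‖_F²/(2λ), where ‖u‖_* denotes the nuclear norm (sum of singular values of u) and ‖·‖_F the Frobenius norm; that is, soft-thresholding of the singular values computes the proximal operator of the nuclear norm. -/

import Mathlib

open Matrix

/-- The Frobenius norm of a real matrix. -/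
noncomputable def frobeniusNorm {m n : ℕ} (u : Matrix (Fin m) (Fin n) ℝ) : ℝ :=
  Real.sqrt (∑ i, ∑ j, (u i j) ^ 2)

/-- The nuclear norm of a real matrix: the sum of its singular values, i.e. the
sum of the square roots of the eigenvalues of `uᴴ * u`. -/
noncomputable def nuclearNorm {m n : ℕ} (u : Matrix (Fin m) (Fin n) ℝ) : ℝ :=
  ∑ i, Real.sqrt ((Matrix.isHermitian_conjTranspose_mul_self u).eigenvalues i)

lemma trace_transpose_mul_eq {m n : ℕ} (A B : Matrix (Fin m) (Fin n) ℝ) :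
    Matrix.trace (Aᵀ * B) = ∑ j, ∑ i, A i j * B i j := by
  simp [Matrix.trace, Matrix.diag, Matrix.mul_apply]

lemma dual_bound {m n : ℕ} (c : ℝ) (hc : 0 ≤ c) (G u : Matrix (Fin m) (Fin n) ℝ)
    (hG : ∀ z : Fin n → ℝ, ∑ i, (G *ᵥ z) i ^ 2 ≤ c ^ 2 * ∑ j, z j ^ 2) :
    Matrix.trace (Gᵀ * u) ≤ c * nuclearNorm u := by
  classical
  have hA := Matrix.isHermitian_conjTranspose_mul_self u
  set W : Matrix (Fin n) (Fin n) ℝ := (Matrix.IsHermitian.eigenvectorUnitary hA : Matrix (Fin n) (Fin n) ℝ) with hWdef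
  have hstar : star W = Wᵀ := by
    rw [Matrix.star_eq_conjTranspose, Matrix.conjTranspose_eq_transpose_of_trivial]
  have hW1 : Wᵀ * W = 1 := by rw [← hstar]; exact Unitary.coe_star_mul_self _
  have hW2 : W * Wᵀ = 1 := by rw [← hstar]; exact Unitary.coe_mul_star_self _
  have hdiag : Wᵀ * (uᴴ * u) * W = Matrix.diagonal hA.eigenvalues := by
    have h := Matrix.IsHermitian.spectral_theorem hA
    rw [Unitary.conjStarAlgAut_apply, ← hWdef, hstar] at h
    conv_lhs => rw [h]
    simp only [Matrix.mul_assoc]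
    rw [hW1, Matrix.mul_one, ← Matrix.mul_assoc, hW1, Matrix.one_mul]
    ext i j; simp [Matrix.diagonal_apply]
  -- cyclic trace
  have huH : uᴴ = uᵀ := Matrix.conjTranspose_eq_transpose_of_trivial u
  have hcyc : Matrix.trace (Gᵀ * u) = Matrix.trace ((G * W)ᵀ * (u * W)) := by
    have : Matrix.trace ((G * W)ᵀ * (u * W)) = Matrix.trace (Gᵀ * u) := by
      rw [Matrix.transpose_mul, Matrix.mul_assoc Wᵀ Gᵀ (u * W), ← Matrix.mul_assoc Gᵀ u W,
        ← Matrix.mul_assoc Wᵀ (Gᵀ * u) W, Matrix.trace_mul_comm (Wᵀ * (Gᵀ * u)) W,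
        ← Matrix.mul_assoc W Wᵀ (Gᵀ * u), hW2, one_mul]
    exact this.symm
  rw [hcyc, trace_transpose_mul_eq]
  have key : ∀ j : Fin n, ∑ i, (G * W) i j * (u * W) i j
      ≤ c * Real.sqrt (hA.eigenvalues j) := by
    intro j
    have cs := Real.sum_mul_le_sqrt_mul_sqrt (Finset.univ : Finset (Fin m))
      (fun i => (G * W) i j) (fun i => (u * W) i j)
    have h1 : ∑ i, (G * W) i j ^ 2 ≤ c ^ 2 := by
      have := hG (fun k => W k j)
      have he : ∀ i, (G * W) i j = (G *ᵥ fun k => W k j) i := by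
        intro i; simp [Matrix.mul_apply, Matrix.mulVec, dotProduct]
      have hw : ∑ k, (W k j) ^ 2 = 1 := by
        have := congrArg (fun M => M j j) hW1
        simpa [Matrix.mul_apply, Matrix.one_apply, pow_two] using this
      calc ∑ i, (G * W) i j ^ 2 = ∑ i, (G *ᵥ fun k => W k j) i ^ 2 := by
            exact Finset.sum_congr rfl fun i _ => by rw [he]
        _ ≤ c ^ 2 * ∑ k, (W k j) ^ 2 := this
        _ = c ^ 2 := by rw [hw, mul_one]
    have h2 : ∑ i, (u * W) i j ^ 2 = hA.eigenvalues j := by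
      have hm : (u * W)ᵀ * (u * W) = Wᵀ * (uᴴ * u) * W := by
        rw [Matrix.transpose_mul, huH, Matrix.mul_assoc Wᵀ uᵀ (u * W),
          ← Matrix.mul_assoc uᵀ u W, ← Matrix.mul_assoc]
      have he2 : ∑ i, (u * W) i j ^ 2 = ((u * W)ᵀ * (u * W)) j j := by
        simp only [Matrix.mul_apply, Matrix.transpose_apply, pow_two, mul_comm]
      rw [he2, hm, hdiag, Matrix.diagonal_apply_eq]
    have hs1 : Real.sqrt (∑ i, (G * W) i j ^ 2) ≤ c := by
      calc Real.sqrt (∑ i, (G * W) i j ^ 2) ≤ Real.sqrt (c ^ 2) := Real.sqrt_le_sqrt h1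
        _ = c := Real.sqrt_sq hc
    calc ∑ i, (G * W) i j * (u * W) i j
        ≤ Real.sqrt (∑ i, (G * W) i j ^ 2) * Real.sqrt (∑ i, (u * W) i j ^ 2) := cs
      _ ≤ c * Real.sqrt (hA.eigenvalues j) := by
          rw [h2]
          exact mul_le_mul_of_nonneg_right hs1 (Real.sqrt_nonneg _)
  calc ∑ j, ∑ i, (G * W) i j * (u * W) i j ≤ ∑ j, c * Real.sqrt (hA.eigenvalues j) :=
        Finset.sum_le_sum fun j _ => key j
    _ = c * nuclearNorm u := by rw [← Finset.mul_sum]; rfl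


open scoped MatrixOrder in
lemma nuclearNorm_eq_trace_sqrt {m n : ℕ} (u : Matrix (Fin m) (Fin n) ℝ) :
    nuclearNorm u = Matrix.trace (CFC.sqrt (uᴴ * u)) := by
  classical
  set hA := Matrix.isHermitian_conjTranspose_mul_self u
  rw [CFC.sqrt_eq_cfc, cfc_nnreal_eq_real _ (uᴴ * u) (Matrix.posSemidef_conjTranspose_mul_self u).nonneg,
    hA.cfc_eq, Matrix.IsHermitian.cfc, Unitary.conjStarAlgAut_apply]
  set W : Matrix (Fin n) (Fin n) ℝ := (Matrix.IsHermitian.eigenvectorUnitary hA : Matrix (Fin n) (Fin n) ℝ)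
  have hstar : star W = Wᵀ := by
    rw [Matrix.star_eq_conjTranspose, Matrix.conjTranspose_eq_transpose_of_trivial]
  have hW1 : Wᵀ * W = 1 := by rw [← hstar]; exact Unitary.coe_star_mul_self _
  rw [hstar, Matrix.trace_mul_cycle, hW1, one_mul, Matrix.trace_diagonal]
  simp [nuclearNorm]
  have hsm : ∀ x : ℝ, Real.sqrt x = Real.sqrt (max x 0) := by
    intro x
    rcases le_total x 0 with h | h
    · rw [max_eq_right h, Real.sqrt_zero, Real.sqrt_eq_zero'.mpr h]
    · rw [max_eq_left h]
  exact Finset.sum_congr rfl fun i _ => hsm _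

lemma transpose_mul_diaglike {m n : ℕ} (T : Matrix (Fin m) (Fin n) ℝ)
    (hT : ∀ (i : Fin m) (j : Fin n), (i : ℕ) ≠ (j : ℕ) → T i j = 0) :
    Tᵀ * T = Matrix.diagonal (fun j : Fin n =>
      (if h : (j : ℕ) < m then T ⟨j, h⟩ j else 0) ^ 2) := by
  classical
  ext j k
  rw [Matrix.mul_apply]
  by_cases hjk : j = k
  · subst hjk
    rw [Matrix.diagonal_apply_eq]
    by_cases h : (j : ℕ) < m
    · rw [dif_pos h]
      rw [Finset.sum_eq_single (⟨(j : ℕ), h⟩ : Fin m)]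
      · simp [pow_two]
      · intro i _ hi
        have : (i : ℕ) ≠ (j : ℕ) := fun hc => hi (Fin.ext hc)
        simp [Matrix.transpose_apply, hT i j this]
      · simp
    · rw [dif_neg h]
      rw [Finset.sum_eq_zero]
      · ring
      · intro i _
        have : (i : ℕ) ≠ (j : ℕ) := by omega
        simp [Matrix.transpose_apply, hT i j this]
  · rw [Matrix.diagonal_apply_ne _ hjk]
    refine Finset.sum_eq_zero fun i _ => ?_
    rcases eq_or_ne (i : ℕ) (j : ℕ) with hij | hij
    · have hik : (i : ℕ) ≠ (k : ℕ) := fun hc => hjk (Fin.ext (hij.symm.trans hc))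
      simp [Matrix.transpose_apply, hT i k hik]
    · simp [Matrix.transpose_apply, hT i j hij]

open scoped MatrixOrder in
lemma nuclearNorm_svd {m n : ℕ} (Q : Matrix (Fin m) (Fin m) ℝ) (V : Matrix (Fin n) (Fin n) ℝ)
    (T : Matrix (Fin m) (Fin n) ℝ)
    (hQ' : Qᵀ * Q = 1) (hV : V * Vᵀ = 1) (hV' : Vᵀ * V = 1)
    (hT : ∀ (i : Fin m) (j : Fin n), (i : ℕ) ≠ (j : ℕ) → T i j = 0)
    (hTnn : ∀ (i : Fin m) (j : Fin n), 0 ≤ T i j) :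
    nuclearNorm (Q * T * Vᵀ) = ∑ j : Fin n, (if h : (j : ℕ) < m then T ⟨j, h⟩ j else 0) := by
  classical
  set t : Fin n → ℝ := fun j => if h : (j : ℕ) < m then T ⟨j, h⟩ j else 0 with ht
  have htnn : ∀ j, 0 ≤ t j := by
    intro j; rw [ht]; dsimp only
    split
    · exact hTnn _ _
    · exact le_rfl
  have hTT : Tᵀ * T = Matrix.diagonal (fun j => t j ^ 2) := transpose_mul_diaglike T hT
  set p : Matrix (Fin m) (Fin n) ℝ := Q * T * Vᵀ with hp
  have hpp : pᴴ * p = V * Matrix.diagonal (fun j => t j ^ 2) * Vᵀ := by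
    rw [Matrix.conjTranspose_eq_transpose_of_trivial, hp]
    rw [Matrix.transpose_mul, Matrix.transpose_mul, Matrix.transpose_transpose]
    calc Vᵀᵀ * (Tᵀ * Qᵀ) * (Q * T * Vᵀ)
        = V * (Tᵀ * ((Qᵀ * Q) * T)) * Vᵀ := by
          rw [Matrix.transpose_transpose]
          repeat rw [Matrix.mul_assoc]
      _ = V * (Tᵀ * T) * Vᵀ := by rw [hQ', Matrix.one_mul]
      _ = V * Matrix.diagonal (fun j => t j ^ 2) * Vᵀ := by rw [hTT]
  have hVH : Vᵀ = Vᴴ := (Matrix.conjTranspose_eq_transpose_of_trivial V).symm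
  have hdiagPSD : Matrix.PosSemidef (Matrix.diagonal t) := by
    rw [Matrix.posSemidef_diagonal_iff]
    exact htnn
  have hB : Matrix.PosSemidef (V * Matrix.diagonal t * Vᵀ) := by
    rw [hVH]
    exact hdiagPSD.mul_mul_conjTranspose_same V
  have hsq : (V * Matrix.diagonal t * Vᵀ) ^ 2 = pᴴ * p := by
    rw [pow_two, hpp]
    calc V * Matrix.diagonal t * Vᵀ * (V * Matrix.diagonal t * Vᵀ)
        = V * (Matrix.diagonal t * ((Vᵀ * V) * (Matrix.diagonal t * Vᵀ))) := by
          repeat rw [Matrix.mul_assoc]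
      _ = V * (Matrix.diagonal t * Matrix.diagonal t) * Vᵀ := by
          rw [hV', Matrix.one_mul]; repeat rw [Matrix.mul_assoc]
      _ = V * Matrix.diagonal (fun j => t j ^ 2) * Vᵀ := by
          rw [Matrix.diagonal_mul_diagonal]
          simp [pow_two]
  have hP := Matrix.posSemidef_conjTranspose_mul_self p
  have hsqrt : V * Matrix.diagonal t * Vᵀ = CFC.sqrt (pᴴ * p) :=
    (CFC.sqrt_unique (a := pᴴ * p) (by rw [← hsq, pow_two]) hB.nonneg).symm
  rw [nuclearNorm_eq_trace_sqrt, ← hsqrt, Matrix.trace_mul_cycle, hV', one_mul,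
    Matrix.trace_diagonal]


lemma trace_transpose_mul_diaglike {m n : ℕ} (A B : Matrix (Fin m) (Fin n) ℝ)
    (hA : ∀ (i : Fin m) (j : Fin n), (i : ℕ) ≠ (j : ℕ) → A i j = 0) :
    Matrix.trace (Aᵀ * B) =
      ∑ j : Fin n, (if h : (j : ℕ) < m then A ⟨j, h⟩ j * B ⟨j, h⟩ j else 0) := by
  rw [trace_transpose_mul_eq]
  refine Finset.sum_congr rfl fun j _ => ?_
  by_cases h : (j : ℕ) < m
  · rw [dif_pos h]
    refine Finset.sum_eq_single (⟨(j : ℕ), h⟩ : Fin m) (fun i _ hi => ?_) (by simp)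
    rw [hA i j (fun hc => hi (Fin.ext hc)), zero_mul]
  · rw [dif_neg h]
    exact Finset.sum_eq_zero fun i _ => by rw [hA i j (by omega), zero_mul]

lemma sum_dite_le {m n : ℕ} (w : Fin n → ℝ) (hw : ∀ j, 0 ≤ w j) :
    ∑ i : Fin m, (if h : (i : ℕ) < n then w ⟨i, h⟩ else 0) ≤ ∑ j, w j := by
  classical
  set g : ℕ → ℝ := fun k => if h : k < n then w ⟨k, h⟩ else 0 with hg
  have hgnn : ∀ k, 0 ≤ g k := by
    intro k; rw [hg]; dsimp only
    split
    · exact hw _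
    · exact le_rfl
  have h1 : ∑ i : Fin m, (if h : (i : ℕ) < n then w ⟨i, h⟩ else 0) = ∑ k ∈ Finset.range m, g k := by
    rw [← Fin.sum_univ_eq_sum_range]
  have h2 : ∑ j, w j = ∑ k ∈ Finset.range n, g k := by
    rw [← Fin.sum_univ_eq_sum_range]
    exact Finset.sum_congr rfl fun j _ => by rw [hg]; simp
  rw [h1, h2]
  have h3 : ∑ k ∈ Finset.range m, g k ≤ ∑ k ∈ Finset.range (max m n), g k :=
    Finset.sum_le_sum_of_subset_of_nonneg
      (Finset.range_subset_range.mpr (le_max_left m n)) (fun k _ _ => hgnn k)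
  have h4 : ∑ k ∈ Finset.range n, g k = ∑ k ∈ Finset.range (max m n), g k := by
    refine Finset.sum_subset (Finset.range_subset_range.mpr (le_max_right m n)) fun k _ hk => ?_
    simp only [Finset.mem_range, not_lt] at hk
    rw [hg]
    dsimp only
    rw [dif_neg (not_lt.mpr hk)]
  rw [h4]
  exact h3

lemma opnorm_bound {m n : ℕ} (Q : Matrix (Fin m) (Fin m) ℝ) (V : Matrix (Fin n) (Fin n) ℝ)
    (D : Matrix (Fin m) (Fin n) ℝ) (c : ℝ)
    (hQ' : Qᵀ * Q = 1) (hV : V * Vᵀ = 1)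
    (hD : ∀ (i : Fin m) (j : Fin n), (i : ℕ) ≠ (j : ℕ) → D i j = 0)
    (hDb : ∀ (i : Fin m) (j : Fin n), |D i j| ≤ c)
    (z : Fin n → ℝ) :
    ∑ i, ((Q * D * Vᵀ) *ᵥ z) i ^ 2 ≤ c ^ 2 * ∑ j, z j ^ 2 := by
  classical
  have hnormQ : ∀ y : Fin m → ℝ, ∑ i, (Q *ᵥ y) i ^ 2 = ∑ i, y i ^ 2 := by
    intro y
    have h1 : ∑ i, (Q *ᵥ y) i ^ 2 = (Q *ᵥ y) ⬝ᵥ (Q *ᵥ y) := by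
      simp [dotProduct, pow_two]
    have h2 : (Q *ᵥ y) ⬝ᵥ (Q *ᵥ y) = y ⬝ᵥ y := by
      rw [Matrix.dotProduct_mulVec, ← Matrix.mulVec_transpose Q (Q *ᵥ y),
        Matrix.mulVec_mulVec, hQ', Matrix.one_mulVec]
    rw [h1, h2]
    simp [dotProduct, pow_two]
  have hnormV : ∑ j, (Vᵀ *ᵥ z) j ^ 2 = ∑ j, z j ^ 2 := by
    have h1 : ∑ j, (Vᵀ *ᵥ z) j ^ 2 = (Vᵀ *ᵥ z) ⬝ᵥ (Vᵀ *ᵥ z) := by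
      simp [dotProduct, pow_two]
    have h2 : (Vᵀ *ᵥ z) ⬝ᵥ (Vᵀ *ᵥ z) = z ⬝ᵥ z := by
      rw [Matrix.dotProduct_mulVec, ← Matrix.mulVec_transpose Vᵀ (Vᵀ *ᵥ z),
        Matrix.transpose_transpose, Matrix.mulVec_mulVec, hV, Matrix.one_mulVec]
    rw [h1, h2]
    simp [dotProduct, pow_two]
  set y := Vᵀ *ᵥ z with hy
  have hsplit : (Q * D * Vᵀ) *ᵥ z = Q *ᵥ (D *ᵥ y) := by
    rw [hy, Matrix.mulVec_mulVec, Matrix.mulVec_mulVec]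
  rw [hsplit, hnormQ]
  have hDentry : ∀ i : Fin m, (D *ᵥ y) i
      = (if h : (i : ℕ) < n then D i ⟨i, h⟩ * y ⟨i, h⟩ else 0) := by
    intro i
    show ∑ j, D i j * y j = _
    by_cases h : (i : ℕ) < n
    · rw [dif_pos h]
      refine Finset.sum_eq_single (⟨(i : ℕ), h⟩ : Fin n) (fun j _ hj => ?_) (by simp)
      rw [hD i j (fun hc => hj (Fin.ext hc.symm)), zero_mul]
    · rw [dif_neg h]
      exact Finset.sum_eq_zero fun j _ => by rw [hD i j (by omega), zero_mul]
  have hterm : ∀ i : Fin m, (D *ᵥ y) i ^ 2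
      ≤ c ^ 2 * (if h : (i : ℕ) < n then y ⟨i, h⟩ ^ 2 else 0) := by
    intro i
    rw [hDentry i]
    by_cases h : (i : ℕ) < n
    · rw [dif_pos h, dif_pos h, mul_pow]
      have : D i ⟨i, h⟩ ^ 2 ≤ c ^ 2 := sq_le_sq' (abs_le.mp (hDb i _)).1 (abs_le.mp (hDb i _)).2
      exact mul_le_mul_of_nonneg_right this (sq_nonneg _)
    · rw [dif_neg h, dif_neg h]
      simp
  calc ∑ i, (D *ᵥ y) i ^ 2
      ≤ ∑ i : Fin m, c ^ 2 * (if h : (i : ℕ) < n then y ⟨i, h⟩ ^ 2 else 0) :=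
        Finset.sum_le_sum fun i _ => hterm i
    _ = c ^ 2 * ∑ i : Fin m, (if h : (i : ℕ) < n then y ⟨i, h⟩ ^ 2 else 0) := by
        rw [Finset.mul_sum]
    _ ≤ c ^ 2 * ∑ j, y j ^ 2 := by
        refine mul_le_mul_of_nonneg_left ?_ (sq_nonneg c)
        exact sum_dite_le (fun j => y j ^ 2) (fun j => sq_nonneg _)
    _ = c ^ 2 * ∑ j, z j ^ 2 := by rw [hnormV]

lemma conj_transpose_prod {m n : ℕ} (Q : Matrix (Fin m) (Fin m) ℝ) (V : Matrix (Fin n) (Fin n) ℝ)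
    (A B : Matrix (Fin m) (Fin n) ℝ) (hQ' : Qᵀ * Q = 1) :
    (Q * A * Vᵀ)ᵀ * (Q * B * Vᵀ) = V * (Aᵀ * B) * Vᵀ := by
  rw [Matrix.transpose_mul, Matrix.transpose_mul, Matrix.transpose_transpose]
  calc Vᵀᵀ * (Aᵀ * Qᵀ) * (Q * B * Vᵀ)
      = V * (Aᵀ * ((Qᵀ * Q) * B)) * Vᵀ := by
        rw [Matrix.transpose_transpose]
        repeat rw [Matrix.mul_assoc]
    _ = V * (Aᵀ * B) * Vᵀ := by rw [hQ', Matrix.one_mul]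


theorem stmt_19 {m n : ℕ} (lam α : ℝ) (hlam : 0 < lam) (hα : 0 < α)
    (x : Matrix (Fin m) (Fin n) ℝ)
    (Q : Matrix (Fin m) (Fin m) ℝ) (V : Matrix (Fin n) (Fin n) ℝ)
    (S : Matrix (Fin m) (Fin n) ℝ)
    (hQ : Q * Qᵀ = 1) (hQ' : Qᵀ * Q = 1)
    (hV : V * Vᵀ = 1) (hV' : Vᵀ * V = 1)
    (hSdiag : ∀ (i : Fin m) (j : Fin n), (i : ℕ) ≠ (j : ℕ) → S i j = 0)
    (hSnn : ∀ (i : Fin m) (j : Fin n), 0 ≤ S i j)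
    (hx : x = Q * S * Vᵀ) :
    IsMinOn (fun u : Matrix (Fin m) (Fin n) ℝ =>
        α * nuclearNorm u + (frobeniusNorm (x - u)) ^ 2 / (2 * lam))
      Set.univ
      (Q * Matrix.of (fun (i : Fin m) (j : Fin n) =>
        if (i : ℕ) = (j : ℕ) then max (S i j - α * lam) 0 else 0) * Vᵀ) := by
  classical
  apply isMinOn_iff.mpr
  intro u _
  set T : Matrix (Fin m) (Fin n) ℝ := Matrix.of (fun (i : Fin m) (j : Fin n) =>
    if (i : ℕ) = (j : ℕ) then max (S i j - α * lam) 0 else 0) with hTdef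
  have hToff : ∀ (i : Fin m) (j : Fin n), (i : ℕ) ≠ (j : ℕ) → T i j = 0 := by
    intro i j hij; simp [hTdef, hij]
  have hTnn : ∀ (i : Fin m) (j : Fin n), 0 ≤ T i j := by
    intro i j
    rcases eq_or_ne (i : ℕ) (j : ℕ) with h | h
    · simp [hTdef, h]
    · simp [hTdef, h]
  set D : Matrix (Fin m) (Fin n) ℝ := S - T with hDdef
  have hDoff : ∀ (i : Fin m) (j : Fin n), (i : ℕ) ≠ (j : ℕ) → D i j = 0 := by
    intro i j hij
    simp [hDdef, Matrix.sub_apply, hSdiag i j hij, hToff i j hij]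
  have hal : 0 ≤ α * lam := le_of_lt (mul_pos hα hlam)
  have hDb : ∀ (i : Fin m) (j : Fin n), |D i j| ≤ α * lam := by
    intro i j
    rcases eq_or_ne (i : ℕ) (j : ℕ) with h | h
    · have hD : D i j = S i j - max (S i j - α * lam) 0 := by
        simp [hDdef, hTdef, Matrix.sub_apply, h]
      rw [hD, abs_le]
      constructor
      · rcases le_total (S i j - α * lam) 0 with hc | hc
        · rw [max_eq_right hc]; have := hSnn i j; linarith
        · rw [max_eq_left hc]; linarith
      · rcases le_total (S i j - α * lam) 0 with hc | hc
        · rw [max_eq_right hc]; linarith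
        · rw [max_eq_left hc]; linarith
    · rw [hDoff i j h, abs_zero]; exact hal
  set p : Matrix (Fin m) (Fin n) ℝ := Q * T * Vᵀ with hpdef
  have hxp : x - p = Q * D * Vᵀ := by
    rw [hx, hpdef, hDdef, Matrix.mul_sub, Matrix.sub_mul]
  set t : Fin n → ℝ := fun j => if h : (j : ℕ) < m then T ⟨j, h⟩ j else 0 with htdef
  have hNp : nuclearNorm p = ∑ j, t j := nuclearNorm_svd Q V T hQ' hV hV' hToff hTnn
  -- trace identity for p
  have hIp : Matrix.trace ((x - p)ᵀ * p) = α * lam * ∑ j, t j := by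
    rw [hxp, hpdef, conj_transpose_prod Q V D T hQ', Matrix.trace_mul_cycle,
      ← Matrix.mul_assoc, hV', Matrix.one_mul, trace_transpose_mul_diaglike D T hDoff,
      Finset.mul_sum]
    refine Finset.sum_congr rfl fun j _ => ?_
    by_cases h : (j : ℕ) < m
    · rw [dif_pos h, htdef]
      dsimp only
      rw [dif_pos h]
      have hDe : D ⟨(j : ℕ), h⟩ j = S ⟨(j : ℕ), h⟩ j - max (S ⟨(j : ℕ), h⟩ j - α * lam) 0 := by
        simp [hDdef, hTdef, Matrix.sub_apply]
      have hTe : T ⟨(j : ℕ), h⟩ j = max (S ⟨(j : ℕ), h⟩ j - α * lam) 0 := by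
        simp [hTdef]
      rw [hDe, hTe]
      rcases le_total (S ⟨(j : ℕ), h⟩ j - α * lam) 0 with hc | hc
      · rw [max_eq_right hc]; ring
      · rw [max_eq_left hc]; ring
    · rw [dif_neg h, htdef]
      dsimp only
      rw [dif_neg h, mul_zero]
  -- dual bound for u
  have hIu : Matrix.trace ((x - p)ᵀ * u) ≤ α * lam * nuclearNorm u := by
    rw [hxp]
    exact dual_bound (α * lam) hal (Q * D * Vᵀ) u
      (fun z => opnorm_bound Q V D (α * lam) hQ' hV hDoff hDb z)
  -- Frobenius expansions
  have hF : ∀ y : Matrix (Fin m) (Fin n) ℝ, frobeniusNorm y ^ 2 = ∑ i, ∑ j, y i j ^ 2 := by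
    intro y
    rw [frobeniusNorm, Real.sq_sqrt]
    positivity
  set a : ℝ := ∑ i, ∑ j, (x - p) i j ^ 2 with hadef
  set e : ℝ := ∑ i, ∑ j, (u - p) i j ^ 2 with hedef
  set ip : ℝ := ∑ i, ∑ j, (x - p) i j * (u - p) i j with hipdef
  have he : 0 ≤ e := by positivity
  have hq : frobeniusNorm (x - u) ^ 2 = a + e - 2 * ip := by
    rw [hF, hadef, hedef, hipdef]
    have hpt : ∀ (i : Fin m) (j : Fin n), (x - u) i j ^ 2
        = (x - p) i j ^ 2 + (u - p) i j ^ 2 - 2 * ((x - p) i j * (u - p) i j) := by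
      intro i j
      simp only [Matrix.sub_apply]
      ring
    calc ∑ i, ∑ j, (x - u) i j ^ 2
        = ∑ i, ∑ j, ((x - p) i j ^ 2 + (u - p) i j ^ 2
            - 2 * ((x - p) i j * (u - p) i j)) :=
          Finset.sum_congr rfl fun i _ => Finset.sum_congr rfl fun j _ => hpt i j
      _ = _ := by
          simp only [Finset.sum_add_distrib, Finset.sum_sub_distrib, ← Finset.mul_sum]
  have hip : ip = Matrix.trace ((x - p)ᵀ * u) - Matrix.trace ((x - p)ᵀ * p) := by
    rw [← Matrix.trace_sub, ← Matrix.mul_sub, trace_transpose_mul_eq, hipdef]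
    rw [Finset.sum_comm]
  have hFp : frobeniusNorm (x - p) ^ 2 = a := by rw [hF, hadef]
  -- final arithmetic
  set st : ℝ := ∑ j, t j with hstdef
  set Nu : ℝ := nuclearNorm u with hNudef
  set Iu : ℝ := Matrix.trace ((x - p)ᵀ * u) with hIudef
  rw [hq, hFp, hNp, hip, hIp]
  have h2l : (0 : ℝ) < 2 * lam := by linarith
  have key : α * st * (2 * lam) + a
      ≤ α * Nu * (2 * lam) + (a + e - 2 * (Iu - α * lam * st)) := by nlinarith [hIu, he]
  calc α * st + a / (2 * lam) = (α * st * (2 * lam) + a) / (2 * lam) := by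
        field_simp
      _ ≤ (α * Nu * (2 * lam) + (a + e - 2 * (Iu - α * lam * st))) / (2 * lam) := by
        gcongr
      _ = α * Nu + (a + e - 2 * (Iu - α * lam * st)) / (2 * lam) := by
        field_simp
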